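/- For any additive valuation v over a finite set M and n agents, there exists a picking order ω (a sequence ω_1,...,ω_m ∈ [n]) such that the ω-picking-order share of an agent with valuation v equals MMS_n(v). Specifically, taking any MMS partition of M and the picking order in which agent k picks at the positions (in the non-increasing value ordering of items by v) corresponding to bundle k, every agent greedily picking the highest remaining item receives a bundle of value at least MMS_n(v). -/

import Mathlib

open Finset

/-- The maximin share of an additive valuation with item values `w` for `n` agents. -/
noncomputable def MMSadd {M : Type*} [Fintype M] [DecidableEq M] (n : ℕ) (w : M → ℝ) : ℝ :=
  sSup {x : ℝ | ∃ P : Fin n → Finset M,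
    (∀ i j, i ≠ j → Disjoint (P i) (P j)) ∧
    Finset.univ.biUnion P = Finset.univ ∧
    ∀ j, x ≤ ∑ e ∈ P j, w e}

/-- Two non-increasing enumerations of the same finite set give the same value sequence. -/
lemma antitone_comp_eq {M : Type*} {m : ℕ} (w : M → ℝ) (σ τ : Fin m ≃ M)
    (hσ : Antitone (w ∘ σ)) (hτ : Antitone (w ∘ τ)) : w ∘ σ = w ∘ τ := by
  have h := Tuple.unique_monotone (α := ℝᵒᵈ) (f := fun j => OrderDual.toDual (w (σ j)))
    (σ := Equiv.refl (Fin m)) (τ := τ.trans σ.symm)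
    (fun i j hij => hσ hij) (fun i j hij => by
      simpa using hτ hij)
  funext j
  have := congrFun h j
  simpa using this

theorem exists_picking_order_share_eq_mms {M : Type*} [Fintype M] [DecidableEq M]
    (n : ℕ) (hn : 0 < n) (w : M → ℝ) (hw : ∀ e, 0 ≤ w e) :
    ∃ ω : Fin (Fintype.card M) → Fin n,
      ∀ σ : Fin (Fintype.card M) ≃ M,
        (∀ i j : Fin (Fintype.card M), i ≤ j → w (σ j) ≤ w (σ i)) →
        Finset.univ.inf' ⟨⟨0, hn⟩, Finset.mem_univ _⟩
            (fun k : Fin n =>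
              ∑ j ∈ Finset.univ.filter (fun j : Fin (Fintype.card M) => ω j = k), w (σ j))
          = MMSadd n w := by
  classical
  set m := Fintype.card M with hm
  -- the property of being a valid partition
  set valid : (Fin n → Finset M) → Prop := fun P =>
    (∀ i j, i ≠ j → Disjoint (P i) (P j)) ∧ Finset.univ.biUnion P = Finset.univ with hvalid
  have hne : (Finset.univ : Finset (Fin n)).Nonempty := ⟨⟨0, hn⟩, Finset.mem_univ _⟩
  set g : (Fin n → Finset M) → ℝ :=
    fun P => Finset.univ.inf' hne (fun k => ∑ e ∈ P k, w e) with hg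
  -- a valid partition exists
  have hval0 : valid (fun k => if k = ⟨0, hn⟩ then Finset.univ else ∅) := by
    constructor
    · intro i j hij
      by_cases hi : i = ⟨0, hn⟩
      · have hj : ¬ j = ⟨0, hn⟩ := fun h => hij (hi.trans h.symm)
        simp [hi, hj]
      · simp [hi]
    · ext e
      simp only [Finset.mem_biUnion, Finset.mem_univ, true_and, iff_true]
      exact ⟨⟨0, hn⟩, by simp⟩
  -- pick a maximizing partition
  obtain ⟨Pstar, hPmem, hPmax⟩ :=
    Finset.exists_max_image (Finset.univ.filter valid) g ⟨_, by simpa using hval0⟩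
  have hPvalid : valid Pstar := (Finset.mem_filter.mp hPmem).2
  have hPmax' : ∀ Q, valid Q → g Q ≤ g Pstar := fun Q hQ =>
    hPmax Q (by simpa using hQ)
  -- MMSadd equals g Pstar
  have hmms : MMSadd n w = g Pstar := by
    have hgreat : IsGreatest {x : ℝ | ∃ P : Fin n → Finset M,
        (∀ i j, i ≠ j → Disjoint (P i) (P j)) ∧
        Finset.univ.biUnion P = Finset.univ ∧
        ∀ j, x ≤ ∑ e ∈ P j, w e} (g Pstar) := by
      constructor
      · exact ⟨Pstar, hPvalid.1, hPvalid.2, fun j => Finset.inf'_le _ (Finset.mem_univ j)⟩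
      · rintro x ⟨P, h1, h2, h3⟩
        calc x ≤ g P := Finset.le_inf' hne _ (fun k _ => h3 k)
          _ ≤ g Pstar := hPmax' P ⟨h1, h2⟩
    exact hgreat.csSup_eq
  -- construct a non-increasing enumeration σ₀
  obtain ⟨e⟩ : Nonempty (Fin m ≃ M) := ⟨(Fintype.equivFin M).symm⟩
  set f : Fin m → ℝᵒᵈ := fun j => OrderDual.toDual (w (e j)) with hf
  set π := Tuple.sort f with hπ
  set σ₀ : Fin m ≃ M := π.trans e with hσ₀
  have hσ₀anti : Antitone (w ∘ σ₀) := by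
    intro i j hij
    exact Tuple.monotone_sort f hij
  -- each item belongs to some bundle
  have hcover : ∀ x : M, ∃ k, x ∈ Pstar k := by
    intro x
    have : x ∈ Finset.univ.biUnion Pstar := hPvalid.2 ▸ Finset.mem_univ x
    obtain ⟨k, _, hk⟩ := Finset.mem_biUnion.mp this
    exact ⟨k, hk⟩
  -- define the picking order
  refine ⟨fun j => Classical.choose (hcover (σ₀ j)), ?_⟩
  intro σ hσanti
  have hσanti' : Antitone (w ∘ σ) := fun i j hij => hσanti i j hij
  have hcomp : w ∘ σ = w ∘ σ₀ := antitone_comp_eq w σ σ₀ hσanti' hσ₀anti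
  have hmem : ∀ j : Fin m, σ₀ j ∈ Pstar (Classical.choose (hcover (σ₀ j))) :=
    fun j => Classical.choose_spec (hcover (σ₀ j))
  have hiff : ∀ (j : Fin m) (k : Fin n),
      Classical.choose (hcover (σ₀ j)) = k ↔ σ₀ j ∈ Pstar k := by
    intro j k
    constructor
    · intro h; exact h ▸ hmem j
    · intro h
      by_contra hne'
      exact Finset.disjoint_left.mp (hPvalid.1 _ _ hne') (hmem j) h
  have hkey : ∀ k : Fin n,
      (∑ j ∈ Finset.univ.filter
        (fun j : Fin m => Classical.choose (hcover (σ₀ j)) = k), w (σ j))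
      = ∑ x ∈ Pstar k, w x := by
    intro k
    have hsum : ∀ j : Fin m, w (σ j) = w (σ₀ j) := fun j => congrFun hcomp j
    rw [Finset.sum_congr rfl (fun j _ => hsum j)]
    apply Finset.sum_bij (fun (j : Fin m) _ => σ₀ j)
    · intro j hj
      exact (hiff j k).mp (Finset.mem_filter.mp hj).2
    · intro a _ b _ hab
      exact σ₀.injective hab
    · intro x hx
      refine ⟨σ₀.symm x, ?_, by simp⟩
      simp only [Finset.mem_filter, Finset.mem_univ, true_and]
      rw [hiff, σ₀.apply_symm_apply]
      exact hx
    · intro j _; rfl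
  rw [hmms]
  congr 1
  funext k
  exact hkey k
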